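/- arXiv:2404.09333 — 2 statements merged into one kernel-verified Lean document; each statement's English description precedes it below -/
import Mathlib

section
/- Let $(S_k)_{k\ge 0}$ and $(\tilde S_k)_{k\ge 0}$ be two independent simple symmetric random walks on $\mathbb{Z}$ with initial values $S_0, \tilde S_0 \in \{-1, 1\}$ each equal to $\pm 1$ with probability $1/2$ independently (i.e., $(S_0,\tilde S_0)$ has distribution $\mu$ uniform on $\{-1,1\}^2$). Let $Q_n = \#\{(j,k) \in [1,n]^2 : S_j = \tilde S_k\}$. Then there is a constant $C > 0$ such that $P_\mu\{Q_n = 0\} \le C/n$ for all $n \ge 1$. -/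
open MeasureTheory ProbabilityTheory

/-- `ε` is an i.i.d. sequence of symmetric `±1` steps. -/
def IsSRWIncrements {Ω : Type*} [MeasureSpace Ω] (ε : ℕ → Ω → ℤ) : Prop :=
  (∀ i, Measurable (ε i)) ∧
  iIndepFun ε ℙ ∧
  (∀ i, ℙ {ω | ε i ω = 1} = 1/2 ∧ ℙ {ω | ε i ω = -1} = 1/2)


namespace SRWAux

/-- step sequence from a Boolean word -/
def stepf (n : ℕ) (b : Fin n → Bool) (i : ℕ) : ℤ :=
  if h : i < n then (if b ⟨i, h⟩ then 1 else -1) else 0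

/-- partial sums -/
def psum (n : ℕ) (b : Fin n → Bool) (j : ℕ) : ℤ :=
  ∑ i ∈ Finset.range j, stepf n b i

lemma psum_zero (n : ℕ) (b : Fin n → Bool) : psum n b 0 = 0 := by simp [psum]

lemma psum_succ (n : ℕ) (b : Fin n → Bool) (j : ℕ) :
    psum n b (j+1) = psum n b j + stepf n b j := by
  simp [psum, Finset.sum_range_succ]

lemma stepf_le_one (n : ℕ) (b : Fin n → Bool) (i : ℕ) : stepf n b i ≤ 1 := by
  unfold stepf; split <;> [skip; omega]; split <;> omega

lemma neg_one_le_stepf (n : ℕ) (b : Fin n → Bool) (i : ℕ) : -1 ≤ stepf n b i := by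
  unfold stepf; split <;> [skip; omega]; split <;> omega

/-- discrete intermediate value theorem, upward version -/
lemma ivt_up (g : ℕ → ℤ) (c : ℤ) :
    ∀ j₂ j₁, j₁ ≤ j₂ → (∀ t, j₁ ≤ t → t < j₂ → g (t+1) ≤ g t + 1) →
      g j₁ ≤ c → c ≤ g j₂ → ∃ t, j₁ ≤ t ∧ t ≤ j₂ ∧ g t = c := by
  intro j₂
  induction j₂ with
  | zero =>
    intro j₁ h hs h1 h2
    have hj : j₁ = 0 := by omega
    subst hj
    exact ⟨0, le_refl _, le_refl _, by omega⟩
  | succ m ih =>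
    intro j₁ h hs h1 h2
    rcases Nat.eq_or_lt_of_le h with rfl | hlt
    · exact ⟨m+1, le_refl _, le_refl _, by omega⟩
    · have hj₁m : j₁ ≤ m := by omega
      by_cases hc : c ≤ g m
      · obtain ⟨t, ht1, ht2, ht3⟩ := ih j₁ hj₁m (fun t h1 h2 => hs t h1 (by omega)) h1 hc
        exact ⟨t, ht1, by omega, ht3⟩
      · have := hs m hj₁m (by omega)
        exact ⟨m+1, by omega, le_refl _, by omega⟩

/-- discrete intermediate value theorem, downward version -/
lemma ivt_down (g : ℕ → ℤ) (c : ℤ) (j₁ j₂ : ℕ) (h : j₁ ≤ j₂)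
    (hs : ∀ t, j₁ ≤ t → t < j₂ → g t ≤ g (t+1) + 1)
    (h1 : c ≤ g j₁) (h2 : g j₂ ≤ c) : ∃ t, j₁ ≤ t ∧ t ≤ j₂ ∧ g t = c := by
  obtain ⟨t, ht1, ht2, ht3⟩ := ivt_up (fun t => -(g t)) (-c) j₂ j₁ h
    (fun t u v => by simpa using by linarith [hs t u v]) (by simpa using h1) (by simpa using h2)
  exact ⟨t, ht1, ht2, by omega⟩

/-- reach level 3 -/
def reach (n : ℕ) (b : Fin n → Bool) : Prop := ∃ j, j ≤ n ∧ psum n b j = 3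

instance (n : ℕ) (b : Fin n → Bool) : Decidable (reach n b) :=
  decidable_of_iff (∃ j : Fin (n+1), psum n b (j : ℕ) = 3)
    (by constructor
        · rintro ⟨j, hj⟩; exact ⟨(j : ℕ), Nat.lt_succ_iff.mp j.isLt, hj⟩
        · rintro ⟨j, hj, hj3⟩; exact ⟨⟨j, Nat.lt_succ_iff.mpr hj⟩, hj3⟩)

lemma not_reach_iff (n : ℕ) (b : Fin n → Bool) :
    ¬ reach n b ↔ ∀ j ≤ n, psum n b j ≤ 2 := by
  constructor
  · intro h j hj
    by_contra hc
    obtain ⟨t, _, ht2, ht3⟩ := ivt_up (psum n b) 3 j 0 (Nat.zero_le _)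
      (fun t _ _ => by rw [psum_succ]; linarith [stepf_le_one n b t])
      (by rw [psum_zero]; omega) (by omega)
    exact h ⟨t, le_trans ht2 hj, ht3⟩
  · rintro h ⟨j, hj, hj3⟩
    have := h j hj; omega

def tau (n : ℕ) (b : Fin n → Bool) : ℕ :=
  if h : reach n b then
    @Nat.find (fun j => psum n b j = 3) (fun j => Int.decEq _ _)
      (Exists.imp (fun j hj => hj.2) h)
  else 0

lemma psum_tau (n : ℕ) (b : Fin n → Bool) (h : reach n b) : psum n b (tau n b) = 3 := by
  unfold tau
  rw [dif_pos h]
  exact Nat.find_spec (Exists.imp (fun j hj => hj.2) h)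

lemma tau_le (n : ℕ) (b : Fin n → Bool) : tau n b ≤ n := by
  unfold tau
  split
  · next h =>
    obtain ⟨j, hj, hj3⟩ := h
    exact le_trans (Nat.find_min' _ hj3) hj
  · exact Nat.zero_le _

lemma tau_min (n : ℕ) (b : Fin n → Bool) (h : reach n b) {j : ℕ} (hj : j < tau n b) :
    psum n b j ≠ 3 := by
  unfold tau at hj
  rw [dif_pos h] at hj
  exact Nat.find_min _ hj

def flip (n : ℕ) (b : Fin n → Bool) : Fin n → Bool :=
  fun i => if (i : ℕ) < tau n b then b i else !(b i)

lemma stepf_flip (n : ℕ) (b : Fin n → Bool) (i : ℕ) :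
    stepf n (flip n b) i = if i < tau n b then stepf n b i else -(stepf n b i) := by
  unfold stepf flip
  by_cases hi : i < n
  · rw [dif_pos hi, dif_pos hi]
    by_cases ht : i < tau n b
    · simp [ht]
    · simp only [if_neg ht]
      cases b ⟨i, hi⟩ <;> simp
  · rw [dif_neg hi, dif_neg hi]; split <;> simp

lemma psum_flip_le (n : ℕ) (b : Fin n → Bool) {j : ℕ} (hj : j ≤ tau n b) :
    psum n (flip n b) j = psum n b j := by
  unfold psum
  apply Finset.sum_congr rfl
  intro i hi
  rw [stepf_flip, if_pos (by simp at hi; omega)]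

lemma psum_flip_ge (n : ℕ) (b : Fin n → Bool) (h : reach n b) {j : ℕ} (hj : tau n b ≤ j) :
    psum n (flip n b) j = 6 - psum n b j := by
  have key : ∀ j, psum n (flip n b) j - psum n (flip n b) (tau n b)
      = ∑ i ∈ Finset.Ico (tau n b) j, stepf n (flip n b) i → True := fun _ _ => trivial
  have h1 : psum n (flip n b) j = psum n (flip n b) (tau n b)
      + ∑ i ∈ Finset.Ico (tau n b) j, stepf n (flip n b) i := by
    rw [Finset.sum_Ico_eq_sub _ hj]; unfold psum; ring
  have h2 : psum n b j = psum n b (tau n b)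
      + ∑ i ∈ Finset.Ico (tau n b) j, stepf n b i := by
    rw [Finset.sum_Ico_eq_sub _ hj]; unfold psum; ring
  have h3 : ∑ i ∈ Finset.Ico (tau n b) j, stepf n (flip n b) i
      = - ∑ i ∈ Finset.Ico (tau n b) j, stepf n b i := by
    rw [← Finset.sum_neg_distrib]
    apply Finset.sum_congr rfl
    intro i hi
    rw [stepf_flip, if_neg (by simp at hi; omega)]
  rw [h1, h3, psum_flip_le n b (le_refl _), psum_tau n b h]
  rw [psum_tau n b h] at h2
  omega

lemma reach_flip (n : ℕ) (b : Fin n → Bool) (h : reach n b) : reach n (flip n b) :=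
  ⟨tau n b, tau_le n b, by rw [psum_flip_le n b (le_refl _)]; exact psum_tau n b h⟩

lemma tau_flip (n : ℕ) (b : Fin n → Bool) (h : reach n b) : tau n (flip n b) = tau n b := by
  have hr := reach_flip n b h
  apply le_antisymm
  · rw [tau, dif_pos hr]
    exact Nat.find_min' _ (by rw [psum_flip_le n b (le_refl _)]; exact psum_tau n b h)
  · by_contra hc
    push_neg at hc
    have := psum_tau n (flip n b) hr
    rw [psum_flip_le n b (le_of_lt hc)] at this
    exact tau_min n b h hc this

lemma flip_flip (n : ℕ) (b : Fin n → Bool) (h : reach n b) : flip n (flip n b) = b := by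
  funext i
  have ht := tau_flip n b h
  rw [show flip n (flip n b) i
      = if (i:ℕ) < tau n (flip n b) then flip n b i else !(flip n b i) from rfl, ht]
  by_cases hi : (i : ℕ) < tau n b <;> simp [flip, hi]

lemma psum_not (n : ℕ) (b : Fin n → Bool) (j : ℕ) :
    psum n (fun i => !(b i)) j = - psum n b j := by
  unfold psum
  rw [← Finset.sum_neg_distrib]
  apply Finset.sum_congr rfl
  intro i _
  unfold stepf
  split
  · next h => rcases hb : b ⟨i, h⟩ <;> simp [hb]
  · simp


open Finset in
lemma card_end_eq_le (n : ℕ) (k : ℤ) :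
    ((univ : Finset (Fin n → Bool)).filter (fun b => psum n b n = k)).card
      ≤ n.choose (n / 2) := by
  have hcard : ∀ b : Fin n → Bool, psum n b n
      = 2 * ((univ.filter (fun i => b i = true)).card : ℤ) - n := by
    intro b
    have h1 : psum n b n = ∑ i : Fin n, (if b i then (1:ℤ) else -1) := by
      unfold psum
      rw [← Fin.sum_univ_eq_sum_range (fun i => stepf n b i) n]
      apply Finset.sum_congr rfl
      intro i _
      unfold stepf
      rw [dif_pos i.isLt]
    have h2 : ∀ i : Fin n, (if b i then (1:ℤ) else -1)
        = 2 * (if b i = true then (1:ℤ) else 0) - 1 := by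
      intro i; rcases hb : b i <;> simp [hb]
    rw [h1]
    simp only [h2]
    rw [Finset.sum_sub_distrib, ← Finset.mul_sum, Finset.sum_boole, Finset.sum_const,
      Finset.card_univ, Fintype.card_fin]
    simp
  set t : ℕ := ((n : ℤ) + k).toNat / 2 with ht
  calc ((univ : Finset (Fin n → Bool)).filter (fun b => psum n b n = k)).card
      ≤ (Finset.powersetCard t (univ : Finset (Fin n))).card := by
        apply Finset.card_le_card_of_injOn (fun b => univ.filter (fun i => b i = true))
        · intro b hb
          rw [Finset.mem_coe, Finset.mem_filter] at hb
          rw [Finset.mem_coe, Finset.mem_powersetCard]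
          refine ⟨Finset.subset_univ _, ?_⟩
          have := hcard b
          rw [hb.2] at this
          have h4 : ((n : ℤ) + k).toNat = 2 * (univ.filter (fun i => b i = true)).card := by
            omega
          beta_reduce
          omega
        · intro b hb b' hb' hbe
          have hbe' : univ.filter (fun i => b i = true) = univ.filter (fun i => b' i = true) := hbe
          funext i
          have : (i ∈ univ.filter (fun i => b i = true)) ↔ (i ∈ univ.filter (fun i => b' i = true)) := by
            rw [hbe']
          simp only [Finset.mem_filter, Finset.mem_univ, true_and] at this
          rcases h1 : b i <;> rcases h2 : b' i <;> simp [h1, h2] at this ⊢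
      _ ≤ n.choose (n / 2) := by
        rw [Finset.card_powersetCard, Finset.card_univ, Fintype.card_fin]
        exact Nat.choose_le_middle _ _

open Finset in
lemma stay_card (n : ℕ) :
    ((univ : Finset (Fin n → Bool)).filter (fun b => ∀ j ≤ n, psum n b j ≤ 2)).card
      ≤ 6 * n.choose (n / 2) := by
  classical
  set U : Finset (Fin n → Bool) := univ with hU
  -- the stay set is the non-reach set
  have hstay : U.filter (fun b => ∀ j ≤ n, psum n b j ≤ 2) = U.filter (fun b => ¬ reach n b) :=
    Finset.filter_congr (fun b _ => (not_reach_iff n b).symm)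
  -- split the end ≤ 2 set by reach
  have hc2 : (U.filter (fun b => psum n b n ≤ 2)).card
      = (U.filter (fun b => reach n b ∧ psum n b n ≤ 2)).card
        + (U.filter (fun b => ¬ reach n b)).card := by
    have := Finset.card_filter_add_card_filter_not (s := U.filter (fun b => psum n b n ≤ 2))
      (fun b => reach n b)
    rw [Finset.filter_filter, Finset.filter_filter] at this
    rw [← this]
    congr 1
    · congr 1; apply Finset.filter_congr; intro b _; constructor <;> (intro h; tauto)
    · congr 1
      apply Finset.filter_congr
      intro b _
      constructor
      · intro h; tauto
      · intro h
        exact ⟨(not_reach_iff n b).mp h n (le_refl n), h⟩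
  -- reflection bijection
  have hc3 : (U.filter (fun b => reach n b ∧ psum n b n ≤ 2)).card
      = (U.filter (fun b => psum n b n ≤ -4)).card := by
    apply Finset.card_bij' (fun b _ => fun i => !(flip n b i))
      (fun c _ => flip n (fun i => !(c i)))
    · intro b hb
      rw [Finset.mem_filter] at hb ⊢
      obtain ⟨_, hr, he⟩ := hb
      refine ⟨Finset.mem_univ _, ?_⟩
      rw [psum_not, psum_flip_ge n b hr (tau_le n b)]
      omega
    · intro c hc
      rw [Finset.mem_filter] at hc ⊢
      obtain ⟨_, he⟩ := hc
      have hrn : reach n (fun i => !(c i)) := by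
        have h3 : (3 : ℤ) ≤ psum n (fun i => !(c i)) n := by rw [psum_not]; omega
        obtain ⟨t, _, ht2, ht3⟩ := ivt_up (psum n (fun i => !(c i))) 3 n 0 (Nat.zero_le _)
          (fun t _ _ => by rw [psum_succ]; linarith [stepf_le_one n (fun i => !(c i)) t])
          (by rw [psum_zero]; omega) h3
        exact ⟨t, ht2, ht3⟩
      refine ⟨Finset.mem_univ _, reach_flip _ _ hrn, ?_⟩
      rw [psum_flip_ge n _ hrn (tau_le _ _), psum_not]
      omega
    · intro b hb
      rw [Finset.mem_filter] at hb
      have hr := hb.2.1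
      have : (fun i => !(!(flip n b i))) = flip n b := by funext i; simp
      rw [this, flip_flip n b hr]
    · intro c hc
      rw [Finset.mem_filter] at hc
      have hrn : reach n (fun i => !(c i)) := by
        have h3 : (3 : ℤ) ≤ psum n (fun i => !(c i)) n := by rw [psum_not]; omega
        obtain ⟨t, _, ht2, ht3⟩ := ivt_up (psum n (fun i => !(c i))) 3 n 0 (Nat.zero_le _)
          (fun t _ _ => by rw [psum_succ]; linarith [stepf_le_one n (fun i => !(c i)) t])
          (by rw [psum_zero]; omega) h3
        exact ⟨t, ht2, ht3⟩
      rw [flip_flip n _ hrn]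
      funext i; simp
  -- split end ≤ 2 by end ≤ -4
  have hc4 : (U.filter (fun b => psum n b n ≤ 2)).card
      = (U.filter (fun b => psum n b n ≤ -4)).card
        + (U.filter (fun b => -3 ≤ psum n b n ∧ psum n b n ≤ 2)).card := by
    have := Finset.card_filter_add_card_filter_not (s := U.filter (fun b => psum n b n ≤ 2))
      (fun b => psum n b n ≤ -4)
    rw [Finset.filter_filter, Finset.filter_filter] at this
    rw [← this]
    congr 1
    · congr 1; apply Finset.filter_congr; intro b _
      constructor
      · intro h; tauto
      · intro h; exact ⟨by omega, h⟩
    · congr 1; apply Finset.filter_congr; intro b _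
      constructor
      · rintro ⟨h1, h2⟩; exact ⟨by omega, h1⟩
      · rintro ⟨h1, h2⟩; exact ⟨h2, by omega⟩
  -- count the middle band
  have hc5 : (U.filter (fun b => -3 ≤ psum n b n ∧ psum n b n ≤ 2)).card
      ≤ 6 * n.choose (n / 2) := by
    calc (U.filter (fun b => -3 ≤ psum n b n ∧ psum n b n ≤ 2)).card
        ≤ ((Finset.Icc (-3 : ℤ) 2).biUnion
            (fun k => U.filter (fun b => psum n b n = k))).card := by
          apply Finset.card_le_card
          intro b hb
          rw [Finset.mem_filter] at hb
          rw [Finset.mem_biUnion]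
          exact ⟨psum n b n, Finset.mem_Icc.mpr ⟨hb.2.1, hb.2.2⟩,
            Finset.mem_filter.mpr ⟨Finset.mem_univ _, rfl⟩⟩
      _ ≤ ∑ k ∈ Finset.Icc (-3 : ℤ) 2, (U.filter (fun b => psum n b n = k)).card :=
          Finset.card_biUnion_le
      _ ≤ ∑ _k ∈ Finset.Icc (-3 : ℤ) 2, n.choose (n / 2) :=
          Finset.sum_le_sum (fun k _ => card_end_eq_le n k)
      _ = 6 * n.choose (n / 2) := by
          rw [Finset.sum_const, Int.card_Icc]
          norm_num
          exact Or.inl rfl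
  rw [hstay]
  omega


lemma cb_sq : ∀ m : ℕ, (2*m+1) * (Nat.centralBinom m)^2 ≤ 16^m := by
  intro m
  induction m with
  | zero => simp [Nat.centralBinom]
  | succ m ih =>
    have hrec := Nat.succ_mul_centralBinom_succ m
    have hpos : 0 < (m+1)^2 := by positivity
    apply Nat.le_of_mul_le_mul_left _ hpos
    have h1 : (m+1)^2 * ((2*(m+1)+1) * (Nat.centralBinom (m+1))^2)
        = (2*m+3) * ((m+1) * Nat.centralBinom (m+1))^2 := by ring
    rw [h1, hrec]
    have h2 : (2*m+3) * (2 * (2*m+1) * Nat.centralBinom m)^2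
        = (4*(2*m+1)*(2*m+3)) * ((2*m+1) * (Nat.centralBinom m)^2) := by ring
    rw [h2]
    calc (4*(2*m+1)*(2*m+3)) * ((2*m+1) * (Nat.centralBinom m)^2)
        ≤ (4*(2*m+1)*(2*m+3)) * 16^m := Nat.mul_le_mul_left _ ih
      _ ≤ (16*(m+1)^2) * 16^m := Nat.mul_le_mul_right _ (by nlinarith)
      _ = (m+1)^2 * 16^(m+1) := by ring

lemma cb_real (m : ℕ) : (Nat.centralBinom m : ℝ) * Real.sqrt (2*m+1) ≤ 4^m := by
  have h := cb_sq m
  have h' : ((2*m+1 : ℕ) : ℝ) * ((Nat.centralBinom m : ℝ))^2 ≤ (16^m : ℕ) := by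
    exact_mod_cast h
  have hnn : (0:ℝ) ≤ (Nat.centralBinom m : ℝ) * Real.sqrt (2*m+1) := by positivity
  have hsq : ((Nat.centralBinom m : ℝ) * Real.sqrt (2*m+1))^2 ≤ ((4:ℝ)^m)^2 := by
    rw [mul_pow, Real.sq_sqrt (by positivity)]
    calc (Nat.centralBinom m : ℝ)^2 * (2*(m:ℝ)+1)
        = ((2*m+1 : ℕ) : ℝ) * ((Nat.centralBinom m : ℝ))^2 := by push_cast; ring
      _ ≤ ((16:ℝ))^m := by exact_mod_cast h'
      _ = ((4:ℝ)^m)^2 := by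
          rw [← pow_mul, show (16:ℝ) = 4^2 by norm_num, ← pow_mul, Nat.mul_comm]
  calc (Nat.centralBinom m : ℝ) * Real.sqrt (2*m+1)
      = Real.sqrt (((Nat.centralBinom m : ℝ) * Real.sqrt (2*m+1))^2) := (Real.sqrt_sq hnn).symm
    _ ≤ Real.sqrt (((4:ℝ)^m)^2) := Real.sqrt_le_sqrt hsq
    _ = 4^m := Real.sqrt_sq (by positivity)

lemma choose_sqrt (n : ℕ) (hn : 1 ≤ n) :
    (n.choose (n/2) : ℝ) * Real.sqrt n ≤ 2^n := by
  rcases Nat.even_or_odd n with ⟨m, hm⟩ | ⟨m, hm⟩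
  · -- n = 2m
    have hm' : n = 2*m := by omega
    subst hm'
    have hdiv : 2*m/2 = m := by omega
    rw [hdiv]
    have hch : (2*m).choose m = Nat.centralBinom m := rfl
    rw [hch]
    have hcast : ((2*m : ℕ) : ℝ) = 2*(m:ℝ) := by push_cast; ring
    rw [hcast]
    calc (Nat.centralBinom m : ℝ) * Real.sqrt (2*(m:ℝ))
        ≤ (Nat.centralBinom m : ℝ) * Real.sqrt (2*(m:ℝ)+1) := by
          apply mul_le_mul_of_nonneg_left (Real.sqrt_le_sqrt (by linarith))
            (by positivity)
      _ ≤ 4^m := by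
          have := cb_real m
          calc (Nat.centralBinom m : ℝ) * Real.sqrt (2*(m:ℝ)+1)
              = (Nat.centralBinom m : ℝ) * Real.sqrt ((2*m+1 : ℕ)) := by push_cast; ring_nf
            _ ≤ 4^m := by exact_mod_cast cb_real m
      _ = 2^(2*m) := by rw [show (4:ℝ) = 2^2 by norm_num, ← pow_mul]
      _ = (2:ℝ)^(2*m) := rfl
  · -- n = 2m+1
    have hm' : n = 2*m+1 := by omega
    subst hm'
    have hdiv : (2*m+1)/2 = m := by omega
    rw [hdiv]
    have hch : (2*m+1).choose m ≤ 2 * Nat.centralBinom m := by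
      rcases Nat.eq_zero_or_pos m with rfl | hmpos
      · simp [Nat.centralBinom]
      · obtain ⟨p, rfl⟩ : ∃ p, m = p + 1 := ⟨m - 1, by omega⟩
        have : (2*(p+1)+1).choose (p+1) = (2*(p+1)).choose p + (2*(p+1)).choose (p+1) := by
          have := Nat.choose_succ_succ (2*(p+1)) p
          convert this using 2 <;> omega
        rw [this]
        have h1 := Nat.choose_le_centralBinom p (p+1)
        have h2 := Nat.choose_le_centralBinom (p+1) (p+1)
        omega
    have hcast : ((2*m+1 : ℕ) : ℝ) = 2*(m:ℝ)+1 := by push_cast; ring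
    rw [hcast]
    calc ((2*m+1).choose m : ℝ) * Real.sqrt (2*(m:ℝ)+1)
        ≤ (2 * Nat.centralBinom m : ℝ) * Real.sqrt (2*(m:ℝ)+1) := by
          apply mul_le_mul_of_nonneg_right _ (Real.sqrt_nonneg _)
          exact_mod_cast hch
      _ = 2 * ((Nat.centralBinom m : ℝ) * Real.sqrt (2*(m:ℝ)+1)) := by push_cast; ring
      _ ≤ 2 * 4^m := by
          have h5 : (Nat.centralBinom m : ℝ) * Real.sqrt (2*(m:ℝ)+1)
              = (Nat.centralBinom m : ℝ) * Real.sqrt ((2*m+1 : ℕ)) := by push_cast; ring_nf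
          rw [h5]
          have h6 : (Nat.centralBinom m : ℝ) * Real.sqrt ((2*m+1 : ℕ)) ≤ 4^m := by
            exact_mod_cast cb_real m
          linarith
      _ = 2^(2*m+1) := by rw [show (4:ℝ) = 2^2 by norm_num, ← pow_mul]; ring
      _ = (2:ℝ)^(2*m+1) := rfl

end SRWAux

open MeasureTheory ProbabilityTheory

lemma pm_null {Ω : Type*} [MeasureSpace Ω] [IsProbabilityMeasure (ℙ : Measure Ω)]
    (f : Ω → ℤ) (hf : Measurable f) (h1 : ℙ {ω | f ω = 1} = 1/2)
    (h2 : ℙ {ω | f ω = -1} = 1/2) :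
    ℙ {ω | ¬(f ω = 1 ∨ f ω = -1)} = 0 := by
  have hm1 : MeasurableSet {ω | f ω = 1} :=
    hf (MeasurableSpace.measurableSet_top : MeasurableSet ({1} : Set ℤ))
  have hm2 : MeasurableSet {ω | f ω = -1} :=
    hf (MeasurableSpace.measurableSet_top : MeasurableSet ({-1} : Set ℤ))
  have hdisj : Disjoint {ω | f ω = 1} {ω | f ω = -1} := by
    rw [Set.disjoint_left]
    intro ω hω1 hω2
    simp only [Set.mem_setOf_eq] at hω1 hω2
    omega
  have hu : ℙ ({ω | f ω = 1} ∪ {ω | f ω = -1}) = 1 := by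
    rw [measure_union hdisj hm2, h1, h2]
    exact ENNReal.add_halves 1
  have hcompl : {ω | ¬(f ω = 1 ∨ f ω = -1)} = ({ω | f ω = 1} ∪ {ω | f ω = -1})ᶜ := by
    ext ω
    simp [Set.mem_union, not_or]
  rw [hcompl, measure_compl (hm1.union hm2) (measure_ne_top _ _), hu, measure_univ]
  simp

lemma onesided {Ω : Type*} [MeasureSpace Ω] [IsProbabilityMeasure (ℙ : Measure Ω)]
    (x : Ω → ℤ) (ε : ℕ → Ω → ℤ) (hx : Measurable x)
    (hxd : ℙ {ω | x ω = 1} = 1/2 ∧ ℙ {ω | x ω = -1} = 1/2)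
    (hε : IsSRWIncrements ε) (n : ℕ) (hn : 1 ≤ n) :
    ℙ {ω | ∀ j, 1 ≤ j → j ≤ n → x ω + ∑ i ∈ Finset.range j, ε i ω ≤ 1}
      ≤ ENNReal.ofReal (6 / Real.sqrt n) := by
  classical
  obtain ⟨hεm, hεi, hεd⟩ := hε
  set G : Set Ω := {ω | (x ω = 1 ∨ x ω = -1) ∧ ∀ i, i < n → (ε i ω = 1 ∨ ε i ω = -1)}
    with hGdef
  have hGc : ℙ Gᶜ = 0 := by
    have hsub : Gᶜ ⊆ {ω | ¬(x ω = 1 ∨ x ω = -1)}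
        ∪ ⋃ (i : ℕ) (_ : i < n), {ω | ¬(ε i ω = 1 ∨ ε i ω = -1)} := by
      intro ω hω
      simp only [hGdef, Set.mem_compl_iff, Set.mem_setOf_eq, not_and_or] at hω
      rcases hω with h | h
      · exact Or.inl h
      · push_neg at h
        obtain ⟨i, hi, hie1, hie2⟩ := h
        refine Or.inr (Set.mem_iUnion.mpr ⟨i, Set.mem_iUnion.mpr ⟨hi, ?_⟩⟩)
        simp only [Set.mem_setOf_eq, not_or]
        exact ⟨hie1, hie2⟩
    apply measure_mono_null hsub
    apply measure_union_null (pm_null x hx hxd.1 hxd.2)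
    apply measure_iUnion_null
    intro i
    apply measure_iUnion_null
    intro hi
    exact pm_null (ε i) (hεm i) (hεd i).1 (hεd i).2
  set V : Finset (Fin n → Bool) :=
    (Finset.univ.filter (fun b => ∀ j ≤ n, SRWAux.psum n b j ≤ 2)) with hVdef
  set E : Set Ω := {ω | ∀ j, 1 ≤ j → j ≤ n → x ω + ∑ i ∈ Finset.range j, ε i ω ≤ 1}
    with hEdef
  have hEsub : E ∩ G ⊆ ⋃ b ∈ V, ⋂ i ∈ Finset.range n, {ω | ε i ω = SRWAux.stepf n b i} := by
    rintro ω ⟨hωE, hωG⟩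
    set b : Fin n → Bool := fun i => decide (ε (i : ℕ) ω = 1) with hb
    have hstep : ∀ i, i < n → SRWAux.stepf n b i = ε i ω := by
      intro i hi
      unfold SRWAux.stepf
      rw [dif_pos hi]
      by_cases h1 : ε i ω = 1
      · simp [hb, h1]
      · have h2 : ε i ω = -1 := by
          rcases hωG.2 i hi with h | h
          · exact absurd h h1
          · exact h
        simp [hb, h1, h2]
    have hps : ∀ j, j ≤ n → SRWAux.psum n b j = ∑ i ∈ Finset.range j, ε i ω := by
      intro j hj
      unfold SRWAux.psum
      apply Finset.sum_congr rfl
      intro i hi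
      exact hstep i (by simp only [Finset.mem_range] at hi; omega)
    have hbV : b ∈ V := by
      rw [hVdef, Finset.mem_filter]
      refine ⟨Finset.mem_univ _, ?_⟩
      intro j hj
      rcases Nat.eq_zero_or_pos j with rfl | hjpos
      · rw [SRWAux.psum_zero]; omega
      · rw [hps j hj]
        have h1 := hωE j hjpos hj
        have h2 := hωG.1
        omega
    apply Set.mem_biUnion hbV
    simp only [Set.mem_iInter, Set.mem_setOf_eq, Finset.mem_range]
    intro i hi
    exact (hstep i hi).symm
  have hCb : ∀ b : Fin n → Bool,
      ℙ (⋂ i ∈ Finset.range n, {ω | ε i ω = SRWAux.stepf n b i}) = ((1:ENNReal)/2)^n := by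
    intro b
    have hmeas : ∀ i ∈ Finset.range n,
        MeasurableSet[MeasurableSpace.comap (ε i) inferInstance]
          {ω | ε i ω = SRWAux.stepf n b i} := by
      intro i _
      refine ⟨{SRWAux.stepf n b i}, MeasurableSpace.measurableSet_top, ?_⟩
      ext ω; simp
    rw [hεi.meas_biInter hmeas]
    have hval : ∀ i ∈ Finset.range n,
        ℙ {ω | ε i ω = SRWAux.stepf n b i} = ((1:ENNReal)/2) := by
      intro i hi
      have hi' : i < n := Finset.mem_range.mp hi
      unfold SRWAux.stepf
      rw [dif_pos hi']
      rcases hbv : b ⟨i, hi'⟩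
      · rw [if_neg (by simp)]
        exact (hεd i).2
      · rw [if_pos rfl]
        exact (hεd i).1
    rw [Finset.prod_congr rfl hval, Finset.prod_const, Finset.card_range]
  have hVcard : ((V.card : ℝ)) ≤ 6 * n.choose (n/2) := by
    exact_mod_cast SRWAux.stay_card n
  have hnpos : (0:ℝ) < n := by exact_mod_cast hn
  have hsqrt : (0:ℝ) < Real.sqrt n := Real.sqrt_pos.mpr hnpos
  have h2n : (0:ℝ) < 2^n := by positivity
  have key : (V.card : ℝ) * (1/2)^n ≤ 6 / Real.sqrt n := by
    have e1 : ((1:ℝ)/2)^n = 1/2^n := by rw [div_pow, one_pow]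
    rw [e1, mul_one_div, div_le_div_iff₀ h2n hsqrt]
    nlinarith [SRWAux.choose_sqrt n hn, Real.sqrt_nonneg (n:ℝ), hVcard,
      Nat.cast_nonneg (α := ℝ) V.card]
  calc ℙ E ≤ ℙ ((E ∩ G) ∪ Gᶜ) := by
        apply measure_mono
        intro ω hω
        by_cases h : ω ∈ G
        · exact Or.inl ⟨hω, h⟩
        · exact Or.inr h
    _ ≤ ℙ (E ∩ G) + ℙ Gᶜ := measure_union_le _ _
    _ = ℙ (E ∩ G) := by rw [hGc, add_zero]
    _ ≤ ℙ (⋃ b ∈ V, ⋂ i ∈ Finset.range n, {ω | ε i ω = SRWAux.stepf n b i}) :=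
        measure_mono hEsub
    _ ≤ ∑ b ∈ V, ℙ (⋂ i ∈ Finset.range n, {ω | ε i ω = SRWAux.stepf n b i}) :=
        measure_biUnion_finset_le _ _
    _ = ∑ _b ∈ V, ((1:ENNReal)/2)^n := Finset.sum_congr rfl (fun b _ => hCb b)
    _ = (V.card : ENNReal) * (1/2)^n := by rw [Finset.sum_const, nsmul_eq_mul]
    _ ≤ ENNReal.ofReal (6 / Real.sqrt n) := by
        have heq : (V.card : ENNReal) * (1/2)^n = ENNReal.ofReal ((V.card : ℝ) * (1/2)^n) := by
          rw [ENNReal.ofReal_mul (by positivity), ENNReal.ofReal_natCast,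
            ENNReal.ofReal_pow (by norm_num)]
          congr 1
          rw [ENNReal.ofReal_div_of_pos (by norm_num)]
          norm_num
        rw [heq]
        exact ENNReal.ofReal_le_ofReal key

lemma onesidedGe {Ω : Type*} [MeasureSpace Ω] [IsProbabilityMeasure (ℙ : Measure Ω)]
    (x : Ω → ℤ) (ε : ℕ → Ω → ℤ) (hx : Measurable x)
    (hxd : ℙ {ω | x ω = 1} = 1/2 ∧ ℙ {ω | x ω = -1} = 1/2)
    (hε : IsSRWIncrements ε) (n : ℕ) (hn : 1 ≤ n) :
    ℙ {ω | ∀ j, 1 ≤ j → j ≤ n → -1 ≤ x ω + ∑ i ∈ Finset.range j, ε i ω}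
      ≤ ENNReal.ofReal (6 / Real.sqrt n) := by
  have hset : {ω | ∀ j, 1 ≤ j → j ≤ n → -1 ≤ x ω + ∑ i ∈ Finset.range j, ε i ω}
      = {ω | ∀ j, 1 ≤ j → j ≤ n →
          (fun ω => -x ω) ω + ∑ i ∈ Finset.range j, (fun (i : ℕ) ω => -ε i ω) i ω ≤ 1} := by
    ext ω
    simp only [Set.mem_setOf_eq]
    have hsum : ∀ j : ℕ, ∑ i ∈ Finset.range j, -ε i ω = -∑ i ∈ Finset.range j, ε i ω := by
      intro j; rw [Finset.sum_neg_distrib]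
    constructor
    · intro h j h1 h2
      have := h j h1 h2
      rw [hsum j]
      omega
    · intro h j h1 h2
      have := h j h1 h2
      rw [hsum j] at this
      omega
  rw [hset]
  have hd1 : ℙ {ω | (fun ω => -x ω) ω = 1} = 1/2 := by
    have : {ω | (fun ω => -x ω) ω = 1} = {ω | x ω = -1} := by
      ext ω; simp only [Set.mem_setOf_eq]; omega
    rw [this]; exact hxd.2
  have hd2 : ℙ {ω | (fun ω => -x ω) ω = -1} = 1/2 := by
    have : {ω | (fun ω => -x ω) ω = -1} = {ω | x ω = 1} := by
      ext ω; simp only [Set.mem_setOf_eq]; omega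
    rw [this]; exact hxd.1
  have hεneg : IsSRWIncrements (fun (i : ℕ) ω => -ε i ω) := by
    refine ⟨fun i => (hε.1 i).neg, ?_, ?_⟩
    · have := hε.2.1.comp (fun _ => (fun z : ℤ => -z)) (fun _ => measurable_neg)
      exact this
    · intro i
      constructor
      · have : {ω | (fun (i : ℕ) ω => -ε i ω) i ω = 1} = {ω | ε i ω = -1} := by
          ext ω; simp only [Set.mem_setOf_eq]; omega
        rw [this]; exact (hε.2.2 i).2
      · have : {ω | (fun (i : ℕ) ω => -ε i ω) i ω = -1} = {ω | ε i ω = 1} := by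
          ext ω; simp only [Set.mem_setOf_eq]; omega
        rw [this]; exact (hε.2.2 i).1
  exact onesided (fun ω => -x ω) (fun i ω => -ε i ω) hx.neg ⟨hd1, hd2⟩ hεneg n hn

/-- Two independent simple symmetric random walks `S, S'` with independent
starting points uniform on `{-1,1}` (so the pair of starting points has the
law `μ` uniform on `{-1,1}²`).  If `Qₙ = #{(j,k) ∈ [1,n]² : S j = S' k}` counts
the mutual intersections, then `P_μ{Qₙ = 0} ≤ C/n` for some constant `C > 0`. -/
theorem srw_no_intersection_bound {Ω : Type*} [MeasureSpace Ω]
    [IsProbabilityMeasure (ℙ : Measure Ω)]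
    (x x' : Ω → ℤ) (ε ε' : ℕ → Ω → ℤ) (S S' : ℕ → Ω → ℤ)
    (hx : Measurable x) (hx' : Measurable x')
    (hxd : ℙ {ω | x ω = 1} = 1/2 ∧ ℙ {ω | x ω = -1} = 1/2)
    (hx'd : ℙ {ω | x' ω = 1} = 1/2 ∧ ℙ {ω | x' ω = -1} = 1/2)
    (hε : IsSRWIncrements ε) (hε' : IsSRWIncrements ε')
    -- the starting point of each walk is independent of its increments
    (hstart : iIndepFun
      (fun i : ℕ => if i = 0 then x else ε (i - 1)) ℙ)
    (hstart' : iIndepFun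
      (fun i : ℕ => if i = 0 then x' else ε' (i - 1)) ℙ)
    -- the two walks (starting points together with increments) are independent
    (hindep : IndepFun (fun ω => (x ω, fun i => ε i ω))
      (fun ω => (x' ω, fun i => ε' i ω)) ℙ)
    (hS : ∀ n ω, S n ω = x ω + ∑ i ∈ Finset.range n, ε i ω)
    (hS' : ∀ n ω, S' n ω = x' ω + ∑ i ∈ Finset.range n, ε' i ω) :
    ∃ C > (0 : ℝ), ∀ n : ℕ, 1 ≤ n →
      ℙ {ω | ∀ j k, 1 ≤ j → j ≤ n → 1 ≤ k → k ≤ n → S j ω ≠ S' k ω}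
        ≤ ENNReal.ofReal (C / n) := by
  classical
  refine ⟨72, by norm_num, ?_⟩
  intro n hn
  -- the good event where all signs are ±1
  set G : Set Ω := {ω | (x ω = 1 ∨ x ω = -1) ∧ (x' ω = 1 ∨ x' ω = -1) ∧
      ∀ i, i < n → ((ε i ω = 1 ∨ ε i ω = -1) ∧ (ε' i ω = 1 ∨ ε' i ω = -1))} with hGdef
  have hGc : ℙ Gᶜ = 0 := by
    have hsub : Gᶜ ⊆ {ω | ¬(x ω = 1 ∨ x ω = -1)} ∪ ({ω | ¬(x' ω = 1 ∨ x' ω = -1)}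
        ∪ ((⋃ (i : ℕ) (_ : i < n), {ω | ¬(ε i ω = 1 ∨ ε i ω = -1)})
          ∪ (⋃ (i : ℕ) (_ : i < n), {ω | ¬(ε' i ω = 1 ∨ ε' i ω = -1)}))) := by
      intro ω hω
      simp only [hGdef, Set.mem_compl_iff, Set.mem_setOf_eq, not_and_or] at hω
      rcases hω with h | h | h
      · exact Or.inl h
      · exact Or.inr (Or.inl h)
      · rw [not_forall] at h
        obtain ⟨i, hie⟩ := h
        rw [Classical.not_imp] at hie
        obtain ⟨hi, hie⟩ := hie
        rcases not_and_or.mp hie with h1 | h1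
        · exact Or.inr (Or.inr (Or.inl (Set.mem_iUnion.mpr ⟨i, Set.mem_iUnion.mpr ⟨hi, h1⟩⟩)))
        · exact Or.inr (Or.inr (Or.inr (Set.mem_iUnion.mpr ⟨i, Set.mem_iUnion.mpr ⟨hi, h1⟩⟩)))
    apply measure_mono_null hsub
    apply measure_union_null (pm_null x hx hxd.1 hxd.2)
    apply measure_union_null (pm_null x' hx' hx'd.1 hx'd.2)
    apply measure_union_null
    · exact measure_iUnion_null fun i => measure_iUnion_null fun _ =>
        pm_null (ε i) (hε.1 i) (hε.2.2 i).1 (hε.2.2 i).2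
    · exact measure_iUnion_null fun i => measure_iUnion_null fun _ =>
        pm_null (ε' i) (hε'.1 i) (hε'.2.2 i).1 (hε'.2.2 i).2
  -- the one-sided barrier sets in path space
  set Ble : Set (ℤ × (ℕ → ℤ)) :=
    {p | ∀ j, 1 ≤ j → j ≤ n → p.1 + ∑ i ∈ Finset.range j, p.2 i ≤ 1} with hBledef
  set Bge : Set (ℤ × (ℕ → ℤ)) :=
    {p | ∀ j, 1 ≤ j → j ≤ n → -1 ≤ p.1 + ∑ i ∈ Finset.range j, p.2 i} with hBgedef
  have hmeasf : ∀ j : ℕ, Measurable (fun p : ℤ × (ℕ → ℤ) => p.1 + ∑ i ∈ Finset.range j, p.2 i) :=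
    fun j => measurable_fst.add
      (Finset.measurable_sum _ (fun i _ => (measurable_pi_apply i).comp measurable_snd))
  have hBle : MeasurableSet Ble := by
    have : Ble = ⋂ (j : ℕ) (_ : 1 ≤ j) (_ : j ≤ n),
        (fun p : ℤ × (ℕ → ℤ) => p.1 + ∑ i ∈ Finset.range j, p.2 i) ⁻¹' (Set.Iic 1) := by
      ext p
      simp only [hBledef, Set.mem_setOf_eq, Set.mem_iInter, Set.mem_preimage, Set.mem_Iic]
    rw [this]
    exact MeasurableSet.iInter fun j => MeasurableSet.iInter fun _ =>
      MeasurableSet.iInter fun _ => (hmeasf j) MeasurableSpace.measurableSet_top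
  have hBge : MeasurableSet Bge := by
    have : Bge = ⋂ (j : ℕ) (_ : 1 ≤ j) (_ : j ≤ n),
        (fun p : ℤ × (ℕ → ℤ) => p.1 + ∑ i ∈ Finset.range j, p.2 i) ⁻¹' (Set.Ici (-1)) := by
      ext p
      simp only [hBgedef, Set.mem_setOf_eq, Set.mem_iInter, Set.mem_preimage, Set.mem_Ici]
    rw [this]
    exact MeasurableSet.iInter fun j => MeasurableSet.iInter fun _ =>
      MeasurableSet.iInter fun _ => (hmeasf j) MeasurableSpace.measurableSet_top
  set T : Ω → ℤ × (ℕ → ℤ) := fun ω => (x ω, fun i => ε i ω) with hTdef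
  set T' : Ω → ℤ × (ℕ → ℤ) := fun ω => (x' ω, fun i => ε' i ω) with hT'def
  -- pointwise inclusion of the no-intersection event
  have hinc : {ω | ∀ j k, 1 ≤ j → j ≤ n → 1 ≤ k → k ≤ n → S j ω ≠ S' k ω} ∩ G
      ⊆ (T ⁻¹' Ble ∩ T' ⁻¹' Bge) ∪ (T' ⁻¹' Ble ∩ T ⁻¹' Bge) := by
    rintro ω ⟨hωE, hωG⟩
    simp only [Set.mem_setOf_eq] at hωE
    obtain ⟨hxv, hx'v, hεv⟩ := hωG
    have hstepS : ∀ t, t < n → (S (t+1) ω ≤ S t ω + 1 ∧ S t ω ≤ S (t+1) ω + 1) := by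
      intro t ht
      have : S (t+1) ω = S t ω + ε t ω := by rw [hS, hS, Finset.sum_range_succ]; ring
      have hev := (hεv t ht).1
      omega
    have hstepS' : ∀ t, t < n → (S' (t+1) ω ≤ S' t ω + 1 ∧ S' t ω ≤ S' (t+1) ω + 1) := by
      intro t ht
      have : S' (t+1) ω = S' t ω + ε' t ω := by rw [hS', hS', Finset.sum_range_succ]; ring
      have hev := (hεv t ht).2
      omega
    have hS1 : -2 ≤ S 1 ω ∧ S 1 ω ≤ 2 := by
      have h1 : S 1 ω = x ω + ε 0 ω := by rw [hS, Finset.sum_range_one]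
      have hev := (hεv 0 (by omega)).1
      omega
    have hS'1 : -2 ≤ S' 1 ω ∧ S' 1 ω ≤ 2 := by
      have h1 : S' 1 ω = x' ω + ε' 0 ω := by rw [hS', Finset.sum_range_one]
      have hev := (hεv 0 (by omega)).2
      omega
    have hne : S 1 ω ≠ S' 1 ω := hωE 1 1 (le_refl 1) hn (le_refl 1) hn
    have hTmem : ∀ f : ℕ → Ω → ℤ, ∀ y : Ω → ℤ, ∀ W : ℕ → Ω → ℤ,
        (∀ m ω', W m ω' = y ω' + ∑ i ∈ Finset.range m, f i ω') → True := fun _ _ _ _ => trivial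
    rcases lt_or_gt_of_ne hne with hlt | hgt
    · left
      constructor
      · -- S stays ≤ 1
        show T ω ∈ Ble
        simp only [hBledef, hTdef, Set.mem_setOf_eq]
        intro j h1 h2
        rw [← hS j ω]
        by_contra hc
        push_neg at hc
        obtain ⟨t, ht1, ht2, ht3⟩ := SRWAux.ivt_up (fun t => S t ω) (S' 1 ω) j 1 h1
          (fun t hta htb => (hstepS t (by omega)).1) (le_of_lt hlt)
          (by show S' 1 ω ≤ S j ω; omega)
        exact hωE t 1 ht1 (le_trans ht2 h2) (le_refl 1) hn ht3
      · -- S' stays ≥ -1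
        show T' ω ∈ Bge
        simp only [hBgedef, hT'def, Set.mem_setOf_eq]
        intro k h1 h2
        rw [← hS' k ω]
        by_contra hc
        push_neg at hc
        obtain ⟨t, ht1, ht2, ht3⟩ := SRWAux.ivt_down (fun t => S' t ω) (S 1 ω) 1 k h1
          (fun t hta htb => (hstepS' t (by omega)).2) (le_of_lt hlt)
          (by show S' k ω ≤ S 1 ω; omega)
        exact (hωE 1 t (le_refl 1) hn ht1 (le_trans ht2 h2)) ht3.symm
    · right
      constructor
      · -- S' stays ≤ 1
        show T' ω ∈ Ble
        simp only [hBledef, hT'def, Set.mem_setOf_eq]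
        intro k h1 h2
        rw [← hS' k ω]
        by_contra hc
        push_neg at hc
        obtain ⟨t, ht1, ht2, ht3⟩ := SRWAux.ivt_up (fun t => S' t ω) (S 1 ω) k 1 h1
          (fun t hta htb => (hstepS' t (by omega)).1) (le_of_lt hgt)
          (by show S 1 ω ≤ S' k ω; omega)
        exact (hωE 1 t (le_refl 1) hn ht1 (le_trans ht2 h2)) ht3.symm
      · -- S stays ≥ -1
        show T ω ∈ Bge
        simp only [hBgedef, hTdef, Set.mem_setOf_eq]
        intro j h1 h2
        rw [← hS j ω]
        by_contra hc
        push_neg at hc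
        obtain ⟨t, ht1, ht2, ht3⟩ := SRWAux.ivt_down (fun t => S t ω) (S' 1 ω) 1 j h1
          (fun t hta htb => (hstepS t (by omega)).2) (le_of_lt hgt)
          (by show S j ω ≤ S' 1 ω; omega)
        exact hωE t 1 ht1 (le_trans ht2 h2) (le_refl 1) hn ht3
  -- probability bounds for the four one-sided events
  have hPle : ℙ (T ⁻¹' Ble) ≤ ENNReal.ofReal (6 / Real.sqrt n) := by
    have : T ⁻¹' Ble = {ω | ∀ j, 1 ≤ j → j ≤ n → x ω + ∑ i ∈ Finset.range j, ε i ω ≤ 1} := by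
      ext ω
      simp only [hBledef, hTdef, Set.mem_preimage, Set.mem_setOf_eq]
    rw [this]
    exact onesided x ε hx hxd hε n hn
  have hP'le : ℙ (T' ⁻¹' Ble) ≤ ENNReal.ofReal (6 / Real.sqrt n) := by
    have : T' ⁻¹' Ble = {ω | ∀ j, 1 ≤ j → j ≤ n → x' ω + ∑ i ∈ Finset.range j, ε' i ω ≤ 1} := by
      ext ω
      simp only [hBledef, hT'def, Set.mem_preimage, Set.mem_setOf_eq]
    rw [this]
    exact onesided x' ε' hx' hx'd hε' n hn
  have hPge : ℙ (T ⁻¹' Bge) ≤ ENNReal.ofReal (6 / Real.sqrt n) := by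
    have : T ⁻¹' Bge = {ω | ∀ j, 1 ≤ j → j ≤ n → -1 ≤ x ω + ∑ i ∈ Finset.range j, ε i ω} := by
      ext ω
      simp only [hBgedef, hTdef, Set.mem_preimage, Set.mem_setOf_eq]
    rw [this]
    exact onesidedGe x ε hx hxd hε n hn
  have hP'ge : ℙ (T' ⁻¹' Bge) ≤ ENNReal.ofReal (6 / Real.sqrt n) := by
    have : T' ⁻¹' Bge = {ω | ∀ j, 1 ≤ j → j ≤ n → -1 ≤ x' ω + ∑ i ∈ Finset.range j, ε' i ω} := by
      ext ω
      simp only [hBgedef, hT'def, Set.mem_preimage, Set.mem_setOf_eq]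
    rw [this]
    exact onesidedGe x' ε' hx' hx'd hε' n hn
  -- independence splits the products
  have hA : ℙ (T ⁻¹' Ble ∩ T' ⁻¹' Bge) = ℙ (T ⁻¹' Ble) * ℙ (T' ⁻¹' Bge) :=
    hindep.measure_inter_preimage_eq_mul _ _ hBle hBge
  have hB : ℙ (T' ⁻¹' Ble ∩ T ⁻¹' Bge) = ℙ (T ⁻¹' Bge) * ℙ (T' ⁻¹' Ble) := by
    rw [Set.inter_comm]
    exact hindep.measure_inter_preimage_eq_mul _ _ hBge hBle
  -- numerics
  have hnpos : (0:ℝ) < n := by exact_mod_cast hn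
  have hmul : ENNReal.ofReal (6 / Real.sqrt n) * ENNReal.ofReal (6 / Real.sqrt n)
      = ENNReal.ofReal (36 / n) := by
    rw [← ENNReal.ofReal_mul (by positivity)]
    congr 1
    rw [div_mul_div_comm, Real.mul_self_sqrt (le_of_lt hnpos)]
    norm_num
  calc ℙ {ω | ∀ j k, 1 ≤ j → j ≤ n → 1 ≤ k → k ≤ n → S j ω ≠ S' k ω}
      ≤ ℙ (({ω | ∀ j k, 1 ≤ j → j ≤ n → 1 ≤ k → k ≤ n → S j ω ≠ S' k ω} ∩ G) ∪ Gᶜ) := by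
        apply measure_mono
        intro ω hω
        by_cases h : ω ∈ G
        · exact Or.inl ⟨hω, h⟩
        · exact Or.inr h
    _ ≤ ℙ ({ω | ∀ j k, 1 ≤ j → j ≤ n → 1 ≤ k → k ≤ n → S j ω ≠ S' k ω} ∩ G) + ℙ Gᶜ :=
        measure_union_le _ _
    _ = ℙ ({ω | ∀ j k, 1 ≤ j → j ≤ n → 1 ≤ k → k ≤ n → S j ω ≠ S' k ω} ∩ G) := by
        rw [hGc, add_zero]
    _ ≤ ℙ ((T ⁻¹' Ble ∩ T' ⁻¹' Bge) ∪ (T' ⁻¹' Ble ∩ T ⁻¹' Bge)) := measure_mono hinc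
    _ ≤ ℙ (T ⁻¹' Ble ∩ T' ⁻¹' Bge) + ℙ (T' ⁻¹' Ble ∩ T ⁻¹' Bge) := measure_union_le _ _
    _ ≤ ENNReal.ofReal (36 / n) + ENNReal.ofReal (36 / n) := by
        rw [hA, hB]
        apply add_le_add
        · rw [← hmul]; exact mul_le_mul' hPle hP'ge
        · rw [← hmul]; exact mul_le_mul' hPge hP'le
    _ = ENNReal.ofReal (72 / n) := by
        rw [← ENNReal.ofReal_add (by positivity) (by positivity)]
        congr 1
        ring
end

section
/- Let $(a_n)_{n\ge 1}$ be a nonincreasing sequence of nonnegative reals. Suppose there exists $C > 0$ such that for all $\theta \in (0,1)$, $\sum_{n=1}^{\infty} \theta^n a_n \le C\big(1 + \log\frac{1}{1-\theta}\big)$. Then $a_n = O\big(\frac{\log n}{n}\big)$ as $n \to \infty$; more precisely there is $C' > 0$ with $a_n \le C' \frac{\log n}{n}$ for all $n \ge 2$. -/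
/-- Tauberian-type bound: if `(aₙ)` is nonincreasing and nonnegative and its
generating function satisfies `∑_{n≥1} θⁿ aₙ ≤ C (1 + log (1/(1-θ)))` for all
`θ ∈ (0,1)`, then `aₙ ≤ C' (log n)/n` for all `n ≥ 2`, for some `C' > 0`. -/
theorem tauberian_log_bound (a : ℕ → ℝ) (ha : ∀ n, 0 ≤ a n) (hmono : Antitone a)
    (C : ℝ) (hC : 0 < C)
    (hgen : ∀ θ : ℝ, θ ∈ Set.Ioo (0 : ℝ) 1 →
      ∑' n : ℕ, θ ^ (n + 1) * a (n + 1) ≤ C * (1 + Real.log (1 / (1 - θ)))) :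
    ∃ C' > (0 : ℝ), ∀ n : ℕ, 2 ≤ n → a n ≤ C' * Real.log n / n := by
  have hl2 : 0 < Real.log 2 := Real.log_pos (by norm_num)
  refine ⟨8 * C * (1 + 1 / Real.log 2), by positivity, ?_⟩
  intro n hn
  have hn2 : (2:ℝ) ≤ n := by exact_mod_cast hn
  have hn0 : (0:ℝ) < n := by linarith
  set θ : ℝ := 1 - 1/n with hθdef
  have hninv : 1/(n:ℝ) ≤ 1/2 := by
    apply one_div_le_one_div_of_le <;> linarith
  have hθ0 : 0 < θ := by rw [hθdef]; linarith
  have hθ1 : θ < 1 := by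
    have : 0 < 1/(n:ℝ) := by positivity
    rw [hθdef]; linarith
  have hmem : θ ∈ Set.Ioo (0:ℝ) 1 := ⟨hθ0, hθ1⟩
  have hsum : Summable (fun k : ℕ => θ^(k+1) * a (k+1)) := by
    apply Summable.of_nonneg_of_le (fun k => mul_nonneg (pow_nonneg hθ0.le _) (ha _))
      (fun k => ?_) ((summable_geometric_of_lt_one hθ0.le hθ1).mul_right (a 1))
    exact mul_le_mul (pow_le_pow_of_le_one hθ0.le hθ1.le (by omega))
      (hmono (by omega)) (ha _) (pow_nonneg hθ0.le _)
  have key : (n:ℝ) * (θ^n * a n) ≤ ∑' k : ℕ, θ^(k+1) * a (k+1) := by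
    calc (n:ℝ) * (θ^n * a n) = ∑ k ∈ Finset.range n, θ^n * a n := by
          rw [Finset.sum_const, Finset.card_range, nsmul_eq_mul]
      _ ≤ ∑ k ∈ Finset.range n, θ^(k+1) * a (k+1) := by
          apply Finset.sum_le_sum
          intro k hk
          have hk' : k + 1 ≤ n := Finset.mem_range.mp hk
          exact mul_le_mul (pow_le_pow_of_le_one hθ0.le hθ1.le hk')
            (hmono hk') (ha n) (pow_nonneg hθ0.le _)
      _ ≤ ∑' k : ℕ, θ^(k+1) * a (k+1) :=
          Summable.sum_le_tsum _ (fun k _ => mul_nonneg (pow_nonneg hθ0.le _) (ha _)) hsum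
  have hlog : Real.log (1 / (1 - θ)) = Real.log n := by
    rw [hθdef, sub_sub_cancel, one_div_one_div]
  have hbound : (n:ℝ) * (θ^n * a n) ≤ C * (1 + Real.log n) := by
    have := key.trans (hgen θ hmem)
    rwa [hlog] at this
  have hn1 : (0:ℝ) < n - 1 := by linarith
  have hθexp : Real.exp (-(1/((n:ℝ)-1))) ≤ θ := by
    have h1 : (1:ℝ) + 1/(n-1) ≤ Real.exp (1/((n:ℝ)-1)) := by
      have := Real.add_one_le_exp (1/((n:ℝ)-1)); linarith
    rw [Real.exp_neg, inv_le_comm₀ (Real.exp_pos _) hθ0]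
    have hinv : θ⁻¹ = 1 + 1/((n:ℝ)-1) := by
      rw [hθdef]; field_simp; ring
    rw [hinv]; exact h1
  have hpow : Real.exp (-2) ≤ θ^n := by
    have h1 : Real.exp (-(1/((n:ℝ)-1)))^n ≤ θ^n :=
      pow_le_pow_left₀ (Real.exp_pos _).le hθexp n
    rw [← Real.exp_nat_mul] at h1
    calc Real.exp (-2) ≤ Real.exp ((n:ℝ) * (-(1/(n-1)))) := by
          apply Real.exp_le_exp.mpr
          rw [mul_neg, neg_le_neg_iff, mul_one_div, div_le_iff₀ hn1]
          linarith
      _ ≤ θ^n := h1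
  have h8 : Real.exp 2 ≤ 8 := by
    have h1 := Real.exp_one_lt_d9
    have h2 : Real.exp 2 = Real.exp 1 * Real.exp 1 := by
      rw [← Real.exp_add]; norm_num
    nlinarith [Real.exp_pos 1]
  have hexp2 : (1:ℝ)/8 ≤ Real.exp (-2) := by
    rw [Real.exp_neg, ← one_div]
    exact one_div_le_one_div_of_le (Real.exp_pos 2) h8
  have hθn : (1:ℝ)/8 ≤ θ^n := hexp2.trans hpow
  have hna : (n:ℝ) * a n ≤ 8 * C * (1 + Real.log n) := by
    have h' : (n:ℝ) * ((1/8) * a n) ≤ n * (θ^n * a n) :=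
      mul_le_mul_of_nonneg_left (mul_le_mul_of_nonneg_right hθn (ha n)) hn0.le
    have he : (n:ℝ) * ((1/8) * a n) = (n * a n)/8 := by ring
    rw [he] at h'
    linarith
  have hlogn : Real.log 2 ≤ Real.log n := Real.log_le_log (by norm_num) hn2
  have hkey : 1 + Real.log n ≤ (1 + 1/Real.log 2) * Real.log n := by
    have h1 : (1:ℝ) ≤ Real.log n / Real.log 2 := (one_le_div hl2).mpr hlogn
    have h2 : Real.log n / Real.log 2 = 1/Real.log 2 * Real.log n := by ring
    nlinarith
  rw [le_div_iff₀ hn0]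
  have h3 : C * (1 + Real.log n) ≤ C * ((1 + 1/Real.log 2) * Real.log n) :=
    mul_le_mul_of_nonneg_left hkey hC.le
  nlinarith
end
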